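/- Let R be a commutative ring and let λ, μ ∈ R be units. Then for all integers a ≥ 0 and n ≥ 0 one has W_μ^λ(a, n+1) = (μ + μ⁻¹)·W_μ^λ(a, n) + W_{λμ}^λ(a−1, n), where by convention W_μ^λ(−1, n) = 0. -/

import Mathlib

open Finset

noncomputable section

/-- `inv(f⁻¹(s), f⁻¹(t))` : the number of pairs `(i, j)` with `i < j`,
`i ∈ f⁻¹(s)` and `j ∈ f⁻¹(t)`. -/
def invP {n : ℕ} (f : Fin n → Fin 3) (s t : Fin 3) : ℕ :=
  ((Finset.univ : Finset (Fin n × Fin n)).filter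
    (fun p => p.1 < p.2 ∧ f p.1 = s ∧ f p.2 = t)).card

/-- The cardinality of `f⁻¹(s)`. -/
def partSize {n : ℕ} (f : Fin n → Fin 3) (s : Fin 3) : ℕ :=
  (Finset.univ.filter (fun i => f i = s)).card

/-- `W_μ^λ(a, n)`: the sum over ordered partitions `{1,…,n} = E₀ ⊔ E ⊔ E₁` (encoded as
functions `f : Fin n → Fin 3`, with `E₀ = f⁻¹(0)`, `E = f⁻¹(1)`, `E₁ = f⁻¹(2)`) with
`|E| = a`, of `λ^(inv(E₀,E) - inv(E₁,E)) · μ^(|E₀| - |E₁|)`.  It vanishes if `a < 0`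
or `a > n`. -/
def W {R : Type*} [CommRing R] (lam mu : Rˣ) (a : ℤ) (n : ℕ) : R :=
  ∑ f ∈ (Finset.univ : Finset (Fin n → Fin 3)).filter (fun f => (partSize f 1 : ℤ) = a),
    ((lam ^ ((invP f 0 1 : ℤ) - (invP f 2 1 : ℤ)) *
      mu ^ ((partSize f 0 : ℤ) - (partSize f 2 : ℤ)) : Rˣ) : R)

lemma partSize_snoc {n : ℕ} (g : Fin n → Fin 3) (c s : Fin 3) :
    partSize (Fin.snoc g c) s = partSize g s + if c = s then 1 else 0 := by
  simp only [partSize, Finset.card_filter]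
  rw [Fin.sum_univ_castSucc]
  simp [Fin.snoc_castSucc, Fin.snoc_last]

lemma invP_snoc {n : ℕ} (g : Fin n → Fin 3) (c s t : Fin 3) :
    invP (Fin.snoc g c) s t = invP g s t + if c = t then partSize g s else 0 := by
  simp only [invP, partSize, Finset.card_filter, Fintype.sum_prod_type]
  rw [Fin.sum_univ_castSucc]
  have h1 : ∀ j : Fin (n+1),
      (if Fin.last n < j ∧ (Fin.snoc g c : Fin (n+1) → Fin 3) (Fin.last n) = s ∧ (Fin.snoc g c : Fin (n+1) → Fin 3) j = t then 1 else 0) = 0 := by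
    intro j
    simp [not_lt.mpr (Fin.le_last j)]
  simp only [h1, Finset.sum_const_zero, add_zero]
  have h2 : ∀ i : Fin n, ∑ j : Fin (n+1),
      (if Fin.castSucc i < j ∧ (Fin.snoc g c : Fin (n+1) → Fin 3) (Fin.castSucc i) = s ∧ (Fin.snoc g c : Fin (n+1) → Fin 3) j = t then 1 else 0)
      = (∑ j : Fin n, if i < j ∧ g i = s ∧ g j = t then 1 else 0)
        + if g i = s ∧ c = t then 1 else 0 := by
    intro i
    rw [Fin.sum_univ_castSucc]
    congr 1
    · apply Finset.sum_congr rfl; intro j _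
      simp [Fin.snoc_castSucc, Fin.castSucc_lt_castSucc_iff]
    · simp [Fin.snoc_castSucc, Fin.snoc_last, Fin.castSucc_lt_last]
  rw [Finset.sum_congr rfl (fun i _ => h2 i), Finset.sum_add_distrib]
  congr 1
  by_cases hc : c = t
  · subst hc
    simp only [eq_self_iff_true, and_true, if_true]
  · simp [hc]

/-- For a commutative ring `R`, units `λ, μ ∈ Rˣ` and integers `a ≥ 0`, `n ≥ 0`,
`W_μ^λ(a, n+1) = (μ + μ⁻¹)·W_μ^λ(a, n) + W_{λμ}^λ(a−1, n)`. -/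
theorem stmt0 {R : Type*} [CommRing R] (lam mu : Rˣ) (a : ℤ) (ha : 0 ≤ a) (n : ℕ) :
    W lam mu a (n + 1) =
      ((mu : R) + ((mu⁻¹ : Rˣ) : R)) * W lam mu a n + W lam (lam * mu) (a - 1) n := by
  classical
  have hW : ∀ (lam mu : Rˣ) (a : ℤ) (m : ℕ), W lam mu a m =
      ∑ g : Fin m → Fin 3, if (partSize g 1 : ℤ) = a then
        ((lam ^ ((invP g 0 1 : ℤ) - (invP g 2 1 : ℤ)) *
          mu ^ ((partSize g 0 : ℤ) - (partSize g 2 : ℤ)) : Rˣ) : R) else 0 := by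
    intro lam mu a m
    rw [W, Finset.sum_filter]
  rw [hW]
  rw [← Equiv.sum_comp (Fin.snocEquiv (fun _ => Fin 3)), Fintype.sum_prod_type,
    Fin.sum_univ_three]
  have hsnoc : ∀ (c : Fin 3) (g : Fin n → Fin 3),
      (Fin.snocEquiv (fun _ => Fin 3)) (c, g) = Fin.snoc g c := fun _ _ => rfl
  have key : ∀ (c : Fin 3) (F : (Fin (n+1) → Fin 3) → R),
      (∑ g : Fin n → Fin 3, F ((Fin.snocEquiv (fun _ => Fin 3)) (c, g)))
      = ∑ g : Fin n → Fin 3, F (Fin.snoc g c) := by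
    intro c F
    exact Finset.sum_congr rfl (fun g _ => by rw [hsnoc])
  have h0 : (∑ g : Fin n → Fin 3,
      (fun f => if (partSize f 1 : ℤ) = a then
        ((lam ^ ((invP f 0 1 : ℤ) - (invP f 2 1 : ℤ)) *
          mu ^ ((partSize f 0 : ℤ) - (partSize f 2 : ℤ)) : Rˣ) : R) else 0)
        ((Fin.snocEquiv (fun _ => Fin 3)) (0, g)))
      = (mu : R) * W lam mu a n := by
    simp only [hsnoc]
    rw [hW, Finset.mul_sum]
    apply Finset.sum_congr rfl
    intro g _
    simp only [partSize_snoc, invP_snoc,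
      show ((0:Fin 3)=1) = False from by decide, show ((0:Fin 3)=2) = False from by decide,
      show ((0:Fin 3)=0) = True from by decide, if_true, if_false, add_zero]
    rw [mul_ite, mul_zero]
    refine if_congr Iff.rfl ?_ rfl
    rw [show (((partSize g 0 + 1 : ℕ)):ℤ) - (partSize g 2 : ℤ)
        = ((partSize g 0 : ℤ) - (partSize g 2 : ℤ)) + 1 by push_cast; ring, zpow_add_one]
    push_cast [Units.val_mul]
    ring
  have h2 : (∑ g : Fin n → Fin 3,
      (fun f => if (partSize f 1 : ℤ) = a then
        ((lam ^ ((invP f 0 1 : ℤ) - (invP f 2 1 : ℤ)) *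
          mu ^ ((partSize f 0 : ℤ) - (partSize f 2 : ℤ)) : Rˣ) : R) else 0)
        ((Fin.snocEquiv (fun _ => Fin 3)) (2, g)))
      = ((mu⁻¹ : Rˣ) : R) * W lam mu a n := by
    simp only [hsnoc]
    rw [hW, Finset.mul_sum]
    apply Finset.sum_congr rfl
    intro g _
    simp only [partSize_snoc, invP_snoc,
      show ((2:Fin 3)=1) = False from by decide, show ((2:Fin 3)=2) = True from by decide,
      show ((2:Fin 3)=0) = False from by decide, if_true, if_false, add_zero]
    rw [mul_ite, mul_zero]
    refine if_congr Iff.rfl ?_ rfl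
    rw [show (partSize g 0 : ℤ) - ((partSize g 2 + 1 : ℕ) : ℤ)
        = ((partSize g 0 : ℤ) - (partSize g 2 : ℤ)) - 1 by push_cast; ring, zpow_sub_one]
    push_cast [Units.val_mul]
    ring
  have h1 : (∑ g : Fin n → Fin 3,
      (fun f => if (partSize f 1 : ℤ) = a then
        ((lam ^ ((invP f 0 1 : ℤ) - (invP f 2 1 : ℤ)) *
          mu ^ ((partSize f 0 : ℤ) - (partSize f 2 : ℤ)) : Rˣ) : R) else 0)
        ((Fin.snocEquiv (fun _ => Fin 3)) (1, g)))
      = W lam (lam * mu) (a - 1) n := by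
    simp only [hsnoc]
    rw [hW]
    apply Finset.sum_congr rfl
    intro g _
    simp only [partSize_snoc, invP_snoc,
      show ((1:Fin 3)=1) = True from by decide, show ((1:Fin 3)=2) = False from by decide,
      show ((1:Fin 3)=0) = False from by decide, if_true, if_false, add_zero]
    refine if_congr (by push_cast; omega) ?_ rfl
    rw [show ((invP g 0 1 + partSize g 0 : ℕ) : ℤ) - ((invP g 2 1 + partSize g 2 : ℕ) : ℤ)
        = ((invP g 0 1 : ℤ) - (invP g 2 1 : ℤ))
          + ((partSize g 0 : ℤ) - (partSize g 2 : ℤ)) by push_cast; ring,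
      zpow_add, mul_zpow]
    push_cast [Units.val_mul]
    ring
  rw [h0, h1, h2]
  ring
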